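/- Let μ > 0, λ > 0, τ > 0, N ≥ 1. Let a¹, …, a^N and b¹, …, b^N be arbitrary periodic grid functions (the frozen coefficients), and let u⁰, …, u^N and w⁰, …, w^N be periodic grid functions satisfying the linearized compact difference scheme: (i) w^k_p = (δ_xx u^k)_p − (h²/12)(δ_xx w^k)_p for all 0 ≤ k ≤ N and p ∈ ℤ; (ii) for all 1 ≤ k ≤ N and p ∈ ℤ, with ū^k = (u^k + u^{k−1})/2 and w̄^k = (w^k + w^{k−1})/2: (u^k_p − u^{k−1}_p)/τ − μ·(w^k_p − w^{k−1}_p)/τ + Ψ(a^k, ū^k)_p − (h²/2)·Ψ(b^k, ū^k)_p + (Δ_x ū^k)_p − (h²/6)·(Δ_x w̄^k)_p − λ·w̄^k_p = 0. Define the discrete energy E^k = ‖u^k‖² + μ·( |u^k|_1² + (h²/12)‖w^k‖² − (h⁴/144)|w^k|_1² ) + 2λτ·∑_{n=1}^{k} ( |ū^n|_1² + (h²/12)‖w̄^n‖² − (h⁴/144)|w̄^n|_1² ). Then E^k = E⁰ for all 0 ≤ k ≤ N. -/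
import Mathlib


open Finset

/-- A periodic grid function with period `M`. -/
def Periodic (M : ℕ) (w : ℤ → ℝ) : Prop := ∀ p : ℤ, w (p + (M : ℤ)) = w p

/-- Discrete inner product `⟨v,w⟩ = h ∑_{p=1}^M v_p w_p`. -/
noncomputable def ip (M : ℕ) (h : ℝ) (v w : ℤ → ℝ) : ℝ :=
  h * ∑ p ∈ Finset.Icc (1 : ℤ) (M : ℤ), v p * w p

/-- Discrete L² norm `‖w‖ = √⟨w,w⟩`. -/
noncomputable def nrm (M : ℕ) (h : ℝ) (w : ℤ → ℝ) : ℝ := Real.sqrt (ip M h w w)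

/-- Discrete H¹ seminorm `|w|₁`. -/
noncomputable def snorm1 (M : ℕ) (h : ℝ) (w : ℤ → ℝ) : ℝ :=
  Real.sqrt (h * ∑ p ∈ Finset.Icc (1 : ℤ) (M : ℤ), ((w p - w (p - 1)) / h) ^ 2)

/-- Centered difference operator `(Δ_x w)_p = (w_{p+1} − w_{p−1})/(2h)`. -/
noncomputable def Dx (h : ℝ) (w : ℤ → ℝ) : ℤ → ℝ :=
  fun p => (w (p + 1) - w (p - 1)) / (2 * h)

/-- Second difference operator `(δ_xx w)_p = (w_{p+1} − 2w_p + w_{p−1})/h²`. -/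
noncomputable def Dxx (h : ℝ) (w : ℤ → ℝ) : ℤ → ℝ :=
  fun p => (w (p + 1) - 2 * w p + w (p - 1)) / h ^ 2

/-- Discrete nonlinear operator `Ψ(v,w)_p = (1/3)(v_p (Δ_x w)_p + (Δ_x (vw))_p)`. -/
noncomputable def Psi (h : ℝ) (v w : ℤ → ℝ) : ℤ → ℝ :=
  fun p => (1 / 3) * (v p * Dx h w p + Dx h (fun q => v q * w q) p)
/-- Discrete energy `E^q` of the compact difference scheme. -/
noncomputable def energy (M : ℕ) (h μ lam τ : ℝ) (u w : ℕ → ℤ → ℝ) (q : ℕ) : ℝ :=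
  (nrm M h (u q)) ^ 2
    + μ * ((snorm1 M h (u q)) ^ 2 + h ^ 2 / 12 * (nrm M h (w q)) ^ 2
            - h ^ 4 / 144 * (snorm1 M h (w q)) ^ 2)
    + 2 * lam * τ *
        ∑ n ∈ Finset.Icc 1 q,
          ((snorm1 M h (fun p => (u n p + u (n - 1) p) / 2)) ^ 2
            + h ^ 2 / 12 * (nrm M h (fun p => (w n p + w (n - 1) p) / 2)) ^ 2
            - h ^ 4 / 144 * (snorm1 M h (fun p => (w n p + w (n - 1) p) / 2)) ^ 2)

section Aux

open Finset
variable {M : ℕ} {h : ℝ}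

/-- auxiliary bilinear form for the H¹ seminorm -/
noncomputable def sf (M : ℕ) (h : ℝ) (v w : ℤ → ℝ) : ℝ :=
  h * ∑ p ∈ Finset.Icc (1 : ℤ) (M : ℤ), ((v p - v (p - 1)) / h) * ((w p - w (p - 1)) / h)

lemma sum_shift (hM : 3 ≤ M) (f : ℤ → ℝ) (hf : Periodic M f) :
    ∑ p ∈ Finset.Icc (1 : ℤ) (M : ℤ), f (p + 1) = ∑ p ∈ Finset.Icc (1 : ℤ) (M : ℤ), f p := by
  have h1 : ∑ p ∈ Finset.Icc (1 : ℤ) (M : ℤ), f (p + 1)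
      = ∑ p ∈ Finset.Icc (2 : ℤ) ((M:ℤ) + 1), f p := by
    rw [show ((2:ℤ)) = 1 + 1 by ring, ← Finset.map_add_right_Icc, Finset.sum_map]
    rfl
  have h2 : Finset.Icc (2 : ℤ) ((M:ℤ) + 1) = insert ((M:ℤ)+1) (Finset.Icc 2 (M:ℤ)) := by
    ext x; simp; omega
  have h3 : Finset.Icc (1 : ℤ) (M:ℤ) = insert 1 (Finset.Icc 2 (M:ℤ)) := by
    ext x; simp; omega
  rw [h1, h2, h3, Finset.sum_insert (by simp), Finset.sum_insert (by simp)]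
  have : f ((M:ℤ) + 1) = f 1 := by rw [add_comm]; exact hf 1
  rw [this]

lemma per_p1 {f : ℤ → ℝ} (hf : Periodic M f) : Periodic M (fun p => f (p + 1)) := fun p => by
  simp only []; rw [show p + (M:ℤ) + 1 = (p + 1) + (M:ℤ) by ring]; exact hf (p + 1)

lemma per_m1 {f : ℤ → ℝ} (hf : Periodic M f) : Periodic M (fun p => f (p - 1)) := fun p => by
  simp only []; rw [show p + (M:ℤ) - 1 = (p - 1) + (M:ℤ) by ring]; exact hf (p - 1)

lemma per_mul {f g : ℤ → ℝ} (hf : Periodic M f) (hg : Periodic M g) :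
    Periodic M (fun p => f p * g p) := fun p => by simp only []; rw [hf p, hg p]

lemma per_Dx {f : ℤ → ℝ} (hf : Periodic M f) : Periodic M (Dx h f) := fun p => by
  unfold Dx
  rw [show p + (M:ℤ) + 1 = (p + 1) + (M:ℤ) by ring, show p + (M:ℤ) - 1 = (p - 1) + (M:ℤ) by ring,
    hf, hf]

lemma per_Dxx {f : ℤ → ℝ} (hf : Periodic M f) : Periodic M (Dxx h f) := fun p => by
  unfold Dxx
  rw [show p + (M:ℤ) + 1 = (p + 1) + (M:ℤ) by ring, show p + (M:ℤ) - 1 = (p - 1) + (M:ℤ) by ring,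
    hf, hf, hf]

lemma per_Psi {c v : ℤ → ℝ} (hc : Periodic M c) (hv : Periodic M v) :
    Periodic M (Psi h c v) := fun p => by
  simp only [Psi]
  rw [hc p, (per_Dx hv) p, (per_Dx (per_mul hc hv)) p]

lemma per_avg {f g : ℤ → ℝ} (hf : Periodic M f) (hg : Periodic M g) :
    Periodic M (fun p => (f p + g p) / 2) := fun p => by simp only []; rw [hf p, hg p]

/- shifted product sums -/
lemma shiftA (hM : 3 ≤ M) {v w : ℤ → ℝ} (hv : Periodic M v) (hw : Periodic M w) :
    ∑ p ∈ Finset.Icc (1 : ℤ) (M : ℤ), v (p + 1) * w p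
      = ∑ p ∈ Finset.Icc (1 : ℤ) (M : ℤ), v p * w (p - 1) := by
  have := sum_shift hM (fun p => v p * w (p - 1)) (per_mul hv (per_m1 hw))
  simpa using this

lemma shiftB (hM : 3 ≤ M) {v w : ℤ → ℝ} (hv : Periodic M v) (hw : Periodic M w) :
    ∑ p ∈ Finset.Icc (1 : ℤ) (M : ℤ), v p * w (p + 1)
      = ∑ p ∈ Finset.Icc (1 : ℤ) (M : ℤ), v (p - 1) * w p := by
  have := sum_shift hM (fun p => v (p - 1) * w p) (per_mul (per_m1 hv) hw)
  simpa using this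

lemma shiftC (hM : 3 ≤ M) {v w : ℤ → ℝ} (hv : Periodic M v) (hw : Periodic M w) :
    ∑ p ∈ Finset.Icc (1 : ℤ) (M : ℤ), v (p - 1) * w (p - 1)
      = ∑ p ∈ Finset.Icc (1 : ℤ) (M : ℤ), v p * w p := by
  have := sum_shift hM (fun p => v (p - 1) * w (p - 1))
    (per_mul (per_m1 hv) (per_m1 hw))
  simp at this
  exact this.symm

/- basic ip lemmas -/
lemma ip_comm (v w : ℤ → ℝ) : ip M h v w = ip M h w v := by
  unfold ip; congr 1; exact Finset.sum_congr rfl fun p _ => by ring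

lemma ip_congr_left {v v' : ℤ → ℝ} (w : ℤ → ℝ) (He : ∀ p, v p = v' p) :
    ip M h v w = ip M h v' w := by
  unfold ip; congr 1; exact Finset.sum_congr rfl fun p _ => by rw [He p]

lemma ip_val1 {v w a1 b1 : ℤ → ℝ} {c1 : ℝ} (H : ∀ p, v p * w p = c1 * (a1 p * b1 p)) :
    ip M h v w = c1 * ip M h a1 b1 := by
  simp only [ip, Finset.mul_sum]
  exact Finset.sum_congr rfl fun p _ => by rw [H p]; ring

lemma ip_val2 {v w a1 b1 a2 b2 : ℤ → ℝ} {c1 c2 : ℝ}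
    (H : ∀ p, v p * w p = c1 * (a1 p * b1 p) + c2 * (a2 p * b2 p)) :
    ip M h v w = c1 * ip M h a1 b1 + c2 * ip M h a2 b2 := by
  simp only [ip, Finset.mul_sum, ← Finset.sum_add_distrib]
  exact Finset.sum_congr rfl fun p _ => by rw [H p]; ring

lemma ip_val4 {v w a1 b1 a2 b2 a3 b3 a4 b4 : ℤ → ℝ} {c1 c2 c3 c4 : ℝ}
    (H : ∀ p, v p * w p = c1 * (a1 p * b1 p) + c2 * (a2 p * b2 p)
      + c3 * (a3 p * b3 p) + c4 * (a4 p * b4 p)) :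
    ip M h v w = c1 * ip M h a1 b1 + c2 * ip M h a2 b2 + c3 * ip M h a3 b3
      + c4 * ip M h a4 b4 := by
  simp only [ip, Finset.mul_sum, ← Finset.sum_add_distrib]
  exact Finset.sum_congr rfl fun p _ => by rw [H p]; ring

lemma sf_comm (v w : ℤ → ℝ) : sf M h v w = sf M h w v := by
  unfold sf; congr 1; exact Finset.sum_congr rfl fun p _ => by ring

/- skew-adjointness of Dx -/
lemma ip_skew (hM : 3 ≤ M) {v w : ℤ → ℝ} (hv : Periodic M v) (hw : Periodic M w) :
    ip M h (Dx h v) w = - ip M h v (Dx h w) := by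
  have key : ∑ p ∈ Finset.Icc (1 : ℤ) (M : ℤ),
      (Dx h v p * w p + v p * Dx h w p) = 0 := by
    have e : ∑ p ∈ Finset.Icc (1 : ℤ) (M : ℤ), (Dx h v p * w p + v p * Dx h w p)
        = (1 / (2 * h)) * (((∑ p ∈ Finset.Icc (1 : ℤ) (M : ℤ), v (p + 1) * w p)
            - ∑ p ∈ Finset.Icc (1 : ℤ) (M : ℤ), v p * w (p - 1))
          + ((∑ p ∈ Finset.Icc (1 : ℤ) (M : ℤ), v p * w (p + 1))
            - ∑ p ∈ Finset.Icc (1 : ℤ) (M : ℤ), v (p - 1) * w p)) := by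
      rw [← Finset.sum_sub_distrib, ← Finset.sum_sub_distrib, ← Finset.sum_add_distrib,
        Finset.mul_sum]
      exact Finset.sum_congr rfl fun p _ => by unfold Dx; ring
    rw [e, shiftA hM hv hw, shiftB hM hv hw]; ring
  have key2 : (∑ p ∈ Finset.Icc (1 : ℤ) (M : ℤ), Dx h v p * w p)
      + ∑ p ∈ Finset.Icc (1 : ℤ) (M : ℤ), v p * Dx h w p = 0 := by
    rw [← Finset.sum_add_distrib]; exact key
  unfold ip
  have : (∑ p ∈ Finset.Icc (1 : ℤ) (M : ℤ), Dx h v p * w p)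
      = - ∑ p ∈ Finset.Icc (1 : ℤ) (M : ℤ), v p * Dx h w p := by linarith
  rw [this]; ring

/- Dxx summation by parts -/
lemma ip_dxx (hM : 3 ≤ M) {v w : ℤ → ℝ} (hv : Periodic M v) (hw : Periodic M w) :
    ip M h (Dxx h v) w = - sf M h v w := by
  have key : ∑ p ∈ Finset.Icc (1 : ℤ) (M : ℤ), Dxx h v p * w p
      = ∑ p ∈ Finset.Icc (1 : ℤ) (M : ℤ), (- (((v p - v (p-1))/h) * ((w p - w (p-1))/h))) := by
    have e : ∑ p ∈ Finset.Icc (1 : ℤ) (M : ℤ), (Dxx h v p * w p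
          + ((v p - v (p-1))/h) * ((w p - w (p-1))/h))
        = (1 / h^2) * (((∑ p ∈ Finset.Icc (1 : ℤ) (M : ℤ), v (p + 1) * w p)
            - ∑ p ∈ Finset.Icc (1 : ℤ) (M : ℤ), v p * w (p - 1))
          + ((∑ p ∈ Finset.Icc (1 : ℤ) (M : ℤ), v (p-1) * w (p-1))
            - ∑ p ∈ Finset.Icc (1 : ℤ) (M : ℤ), v p * w p)) := by
      rw [← Finset.sum_sub_distrib, ← Finset.sum_sub_distrib, ← Finset.sum_add_distrib,
        Finset.mul_sum]
      exact Finset.sum_congr rfl fun p _ => by unfold Dxx; ring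
    have e0 : ∑ p ∈ Finset.Icc (1 : ℤ) (M : ℤ), (Dxx h v p * w p
          + ((v p - v (p-1))/h) * ((w p - w (p-1))/h)) = 0 := by
      rw [e, shiftA hM hv hw, shiftC hM hv hw]; ring
    rw [Finset.sum_add_distrib] at e0
    rw [Finset.sum_neg_distrib]
    linarith
  unfold ip sf
  rw [key, Finset.sum_neg_distrib]; ring

lemma ip_dxx_symm (hM : 3 ≤ M) {v w : ℤ → ℝ} (hv : Periodic M v) (hw : Periodic M w) :
    ip M h (Dxx h v) w = ip M h v (Dxx h w) := by
  rw [ip_dxx hM hv hw, ip_comm v (Dxx h w), ip_dxx hM hw hv, sf_comm]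

lemma ip_dx_self (hM : 3 ≤ M) {v : ℤ → ℝ} (hv : Periodic M v) :
    ip M h v (Dx h v) = 0 := by
  have h1 := ip_skew (h := h) hM hv hv
  have h2 := ip_comm (M := M) (h := h) (Dx h v) v
  linarith

lemma dx_dxx_comm (v : ℤ → ℝ) : Dx h (Dxx h v) = Dxx h (Dx h v) := by
  funext p
  simp only [Dx, Dxx, add_sub_cancel_right, sub_add_cancel]
  ring

lemma ip_dxx_dx_self (hM : 3 ≤ M) {v : ℤ → ℝ} (hv : Periodic M v) :
    ip M h (Dxx h v) (Dx h v) = 0 := by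
  have h1 : ip M h (Dxx h v) (Dx h v) = ip M h v (Dxx h (Dx h v)) :=
    ip_dxx_symm hM hv (per_Dx hv)
  rw [← dx_dxx_comm] at h1
  have h2 : ip M h (Dx h v) (Dxx h v) = - ip M h v (Dx h (Dxx h v)) :=
    ip_skew hM hv (per_Dxx hv)
  have h3 := ip_comm (M := M) (h := h) (Dx h v) (Dxx h v)
  linarith

lemma ip_psi_self (hM : 3 ≤ M) {c v : ℤ → ℝ} (hc : Periodic M c) (hv : Periodic M v) :
    ip M h (Psi h c v) v = 0 := by
  have e1 : ip M h (Psi h c v) v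
      = (1/3) * ip M h (Dx h v) (fun p => c p * v p)
        + (1/3) * ip M h (Dx h (fun q => c q * v q)) v := by
    apply ip_val2
    intro p
    simp only [Psi, Dx]
    ring
  have e2 : ip M h (Dx h (fun q => c q * v q)) v
      = - ip M h (fun q => c q * v q) (Dx h v) := ip_skew hM (per_mul hc hv) hv
  have e3 := ip_comm (M := M) (h := h) (Dx h v) (fun p => c p * v p)
  rw [e1, e2, e3]; ring

end Aux

section Aux2

open Finset
variable {M : ℕ} {h : ℝ}

lemma ip_congr_right {w w' : ℤ → ℝ} (v : ℤ → ℝ) (He : ∀ p, w p = w' p) :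
    ip M h v w = ip M h v w' := by
  unfold ip; congr 1; exact Finset.sum_congr rfl fun p _ => by rw [He p]

lemma nrm_sq (hh : 0 < h) (f : ℤ → ℝ) : (nrm M h f) ^ 2 = ip M h f f := by
  rw [nrm, Real.sq_sqrt]
  exact mul_nonneg hh.le (Finset.sum_nonneg fun p _ => mul_self_nonneg _)

lemma snorm1_sq (hh : 0 < h) (f : ℤ → ℝ) : (snorm1 M h f) ^ 2 = sf M h f f := by
  rw [snorm1, Real.sq_sqrt (mul_nonneg hh.le (Finset.sum_nonneg fun p _ => sq_nonneg _))]
  unfold sf; congr 1; exact Finset.sum_congr rfl fun p _ => by ring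

lemma pair_ip (hM : 3 ≤ M) {u1 w1 u2 w2 : ℤ → ℝ}
    (hu1 : Periodic M u1) (hw1 : Periodic M w1) (hu2 : Periodic M u2) (hw2 : Periodic M w2)
    (hr1 : ∀ p, w1 p = Dxx h u1 p - h ^ 2 / 12 * Dxx h w1 p)
    (hr2 : ∀ p, w2 p = Dxx h u2 p - h ^ 2 / 12 * Dxx h w2 p) :
    ip M h w1 u2 = - sf M h u1 u2 - h ^ 2 / 12 * ip M h w1 w2
      + h ^ 4 / 144 * sf M h w1 w2 := by
  have s1 : ip M h w1 u2
      = ip M h (fun p => Dxx h u1 p - h ^ 2 / 12 * Dxx h w1 p) u2 := ip_congr_left u2 hr1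
  have s2 : ip M h (fun p => Dxx h u1 p - h ^ 2 / 12 * Dxx h w1 p) u2
      = 1 * ip M h (Dxx h u1) u2 + (-(h ^ 2 / 12)) * ip M h (Dxx h w1) u2 :=
    ip_val2 fun p => by ring
  have s3 : ip M h (Dxx h u1) u2 = - sf M h u1 u2 := ip_dxx hM hu1 hu2
  have s4 : ip M h (Dxx h w1) u2 = ip M h w1 (Dxx h u2) := ip_dxx_symm hM hw1 hu2
  have s5 : ip M h w1 (Dxx h u2)
      = ip M h w1 (fun p => w2 p + h ^ 2 / 12 * Dxx h w2 p) :=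
    ip_congr_right w1 (fun p => by have := hr2 p; linarith)
  have s6 : ip M h w1 (fun p => w2 p + h ^ 2 / 12 * Dxx h w2 p)
      = 1 * ip M h w1 w2 + (h ^ 2 / 12) * ip M h w1 (Dxx h w2) :=
    ip_val2 fun p => by ring
  have s7 : ip M h w1 (Dxx h w2) = - sf M h w1 w2 := by
    rw [ip_comm, ip_dxx hM hw2 hw1, sf_comm]
  rw [s1, s2, s3, s4, s5, s6, s7]; ring

lemma ip_dxavg (hM : 3 ≤ M) {uu ww : ℤ → ℝ}
    (huu : Periodic M uu) (hww : Periodic M ww)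
    (hr : ∀ p, ww p = Dxx h uu p - h ^ 2 / 12 * Dxx h ww p) :
    ip M h ww (Dx h uu) = 0 := by
  have s1 : ip M h ww (Dx h uu)
      = ip M h (fun p => Dxx h uu p - h ^ 2 / 12 * Dxx h ww p) (Dx h uu) :=
    ip_congr_left _ hr
  have s2 : ip M h (fun p => Dxx h uu p - h ^ 2 / 12 * Dxx h ww p) (Dx h uu)
      = 1 * ip M h (Dxx h uu) (Dx h uu) + (-(h ^ 2 / 12)) * ip M h (Dxx h ww) (Dx h uu) :=
    ip_val2 fun p => by ring
  have s3 : ip M h (Dxx h uu) (Dx h uu) = 0 := ip_dxx_dx_self hM huu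
  have s4 : ip M h (Dxx h ww) (Dx h uu) = ip M h ww (Dxx h (Dx h uu)) :=
    ip_dxx_symm hM hww (per_Dx huu)
  have s5 : ip M h ww (Dxx h (Dx h uu)) = ip M h ww (Dx h (Dxx h uu)) := by
    rw [dx_dxx_comm]
  have s6 : ip M h (Dx h ww) (Dxx h uu) = - ip M h ww (Dx h (Dxx h uu)) :=
    ip_skew hM hww (per_Dxx huu)
  have s7 : ip M h (Dx h ww) (Dxx h uu) = ip M h (Dxx h uu) (Dx h ww) := ip_comm _ _
  have s8 : ip M h (Dxx h uu) (Dx h ww)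
      = ip M h (fun p => ww p + h ^ 2 / 12 * Dxx h ww p) (Dx h ww) :=
    ip_congr_left _ (fun p => by have := hr p; linarith)
  have s9 : ip M h (fun p => ww p + h ^ 2 / 12 * Dxx h ww p) (Dx h ww)
      = 1 * ip M h ww (Dx h ww) + (h ^ 2 / 12) * ip M h (Dxx h ww) (Dx h ww) :=
    ip_val2 fun p => by ring
  have s10 : ip M h ww (Dx h ww) = 0 := ip_dx_self hM hww
  have s11 : ip M h (Dxx h ww) (Dx h ww) = 0 := ip_dxx_dx_self hM hww
  have z1 : ip M h (Dxx h uu) (Dx h ww) = 0 := by rw [s8, s9, s10, s11]; ring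
  have z2 : ip M h ww (Dx h (Dxx h uu)) = 0 := by
    rw [s7, z1] at s6; linarith
  rw [s1, s2, s3, s4, s5, z2]; ring

end Aux2


/-- energy conservation of the linearized compact difference scheme
with frozen coefficients `a`, `b`. -/
theorem stmt_15 (M : ℕ) (hM : 3 ≤ M) (h : ℝ) (hh : 0 < h) (L : ℝ) (hL : L = M * h)
    (μ lam τ : ℝ) (hμ : 0 < μ) (hlam : 0 < lam) (hτ : 0 < τ)
    (N : ℕ) (hN : 1 ≤ N) (a b : ℕ → ℤ → ℝ) (u w : ℕ → ℤ → ℝ)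
    (ha : ∀ k, 1 ≤ k → k ≤ N → Periodic M (a k))
    (hb : ∀ k, 1 ≤ k → k ≤ N → Periodic M (b k))
    (hu : ∀ k ≤ N, Periodic M (u k)) (hw : ∀ k ≤ N, Periodic M (w k))
    (hrel : ∀ k ≤ N, ∀ p : ℤ, w k p = Dxx h (u k) p - h ^ 2 / 12 * Dxx h (w k) p)
    (hscheme : ∀ k, 1 ≤ k → k ≤ N → ∀ p : ℤ,
      (u k p - u (k - 1) p) / τ - μ * ((w k p - w (k - 1) p) / τ)
        + Psi h (a k) (fun r => (u k r + u (k - 1) r) / 2) p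
        - h ^ 2 / 2 * Psi h (b k) (fun r => (u k r + u (k - 1) r) / 2) p
        + Dx h (fun r => (u k r + u (k - 1) r) / 2) p
        - h ^ 2 / 6 * Dx h (fun r => (w k r + w (k - 1) r) / 2) p
        - lam * ((w k p + w (k - 1) p) / 2) = 0) :
    ∀ k ≤ N, energy M h μ lam τ u w k = energy M h μ lam τ u w 0 := by
  have hτ' : τ ≠ 0 := ne_of_gt hτ
  have hinv : τ * τ⁻¹ = 1 := mul_inv_cancel₀ hτ'
  have step : ∀ m : ℕ, m + 1 ≤ N →
      energy M h μ lam τ u w (m + 1) = energy M h μ lam τ u w m := by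
    intro m hm1
    have hmN : m ≤ N := by omega
    have hx := hu (m+1) hm1
    have hy := hu m hmN
    have hX := hw (m+1) hm1
    have hY := hw m hmN
    have hA := ha (m+1) (by omega) hm1
    have hB := hb (m+1) (by omega) hm1
    have hub : Periodic M (fun p => (u (m+1) p + u m p) / 2) := per_avg hx hy
    have hwb : Periodic M (fun p => (w (m+1) p + w m p) / 2) := per_avg hX hY
    have hrx := hrel (m+1) hm1
    have hry := hrel m hmN
    have hrb : ∀ p, (fun p => (w (m+1) p + w m p) / 2) p
        = Dxx h (fun p => (u (m+1) p + u m p) / 2) p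
          - h ^ 2 / 12 * Dxx h (fun p => (w (m+1) p + w m p) / 2) p := by
      intro p
      have e1 := hrx p
      have e2 := hry p
      simp only [Dxx] at e1 e2 ⊢
      linear_combination e1 / 2 + e2 / 2
    -- pointwise scheme multiplied by τ
    have hG : ∀ p : ℤ, (u (m+1) p - u m p) - μ * (w (m+1) p - w m p)
        + τ * Psi h (a (m+1)) (fun r => (u (m+1) r + u m r) / 2) p
        - τ * (h ^ 2 / 2 * Psi h (b (m+1)) (fun r => (u (m+1) r + u m r) / 2) p)
        + τ * Dx h (fun r => (u (m+1) r + u m r) / 2) p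
        - τ * (h ^ 2 / 6 * Dx h (fun r => (w (m+1) r + w m r) / 2) p)
        - τ * (lam * ((w (m+1) p + w m p) / 2)) = 0 := by
      intro p
      have h0 := hscheme (m+1) (by omega) hm1 p
      simp only [Nat.add_sub_cancel] at h0
      linear_combination τ * h0 - (u (m+1) p - u m p - μ * (w (m+1) p - w m p)) * hinv
    have master : ip M h (fun p => (u (m+1) p - u m p) - μ * (w (m+1) p - w m p)
        + τ * Psi h (a (m+1)) (fun r => (u (m+1) r + u m r) / 2) p
        - τ * (h ^ 2 / 2 * Psi h (b (m+1)) (fun r => (u (m+1) r + u m r) / 2) p)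
        + τ * Dx h (fun r => (u (m+1) r + u m r) / 2) p
        - τ * (h ^ 2 / 6 * Dx h (fun r => (w (m+1) r + w m r) / 2) p)
        - τ * (lam * ((w (m+1) p + w m p) / 2)))
        (fun p => u (m+1) p + u m p) = 0 := by
      simp only [ip]
      rw [Finset.sum_eq_zero fun p _ => by rw [hG p, zero_mul], mul_zero]
    have expand : ip M h (fun p => (u (m+1) p - u m p) - μ * (w (m+1) p - w m p)
        + τ * Psi h (a (m+1)) (fun r => (u (m+1) r + u m r) / 2) p
        - τ * (h ^ 2 / 2 * Psi h (b (m+1)) (fun r => (u (m+1) r + u m r) / 2) p)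
        + τ * Dx h (fun r => (u (m+1) r + u m r) / 2) p
        - τ * (h ^ 2 / 6 * Dx h (fun r => (w (m+1) r + w m r) / 2) p)
        - τ * (lam * ((w (m+1) p + w m p) / 2)))
        (fun p => u (m+1) p + u m p)
        = ip M h (fun p => u (m+1) p - u m p) (fun p => u (m+1) p + u m p)
          - μ * ip M h (fun p => w (m+1) p - w m p) (fun p => u (m+1) p + u m p)
          + τ * ip M h (Psi h (a (m+1)) (fun r => (u (m+1) r + u m r) / 2))
              (fun p => u (m+1) p + u m p)
          - τ * (h ^ 2 / 2) * ip M h (Psi h (b (m+1)) (fun r => (u (m+1) r + u m r) / 2))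
              (fun p => u (m+1) p + u m p)
          + τ * ip M h (Dx h (fun r => (u (m+1) r + u m r) / 2))
              (fun p => u (m+1) p + u m p)
          - τ * (h ^ 2 / 6) * ip M h (Dx h (fun r => (w (m+1) r + w m r) / 2))
              (fun p => u (m+1) p + u m p)
          - τ * lam * ip M h (fun p => (w (m+1) p + w m p) / 2)
              (fun p => u (m+1) p + u m p) := by
      simp only [ip, Finset.mul_sum, ← Finset.sum_add_distrib, ← Finset.sum_sub_distrib]
      exact Finset.sum_congr rfl fun p _ => by ring
    rw [expand] at master
    -- values of individual terms
    have v1 : ip M h (fun p => u (m+1) p - u m p) (fun p => u (m+1) p + u m p)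
        = 1 * ip M h (u (m+1)) (u (m+1)) + (-1) * ip M h (u m) (u m) :=
      ip_val2 fun p => by ring
    have v2 : ip M h (fun p => w (m+1) p - w m p) (fun p => u (m+1) p + u m p)
        = 1 * ip M h (w (m+1)) (u (m+1)) + 1 * ip M h (w (m+1)) (u m)
          + (-1) * ip M h (w m) (u (m+1)) + (-1) * ip M h (w m) (u m) :=
      ip_val4 fun p => by ring
    have v3 : ip M h (Psi h (a (m+1)) (fun r => (u (m+1) r + u m r) / 2))
        (fun p => u (m+1) p + u m p)
        = 2 * ip M h (Psi h (a (m+1)) (fun r => (u (m+1) r + u m r) / 2))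
            (fun r => (u (m+1) r + u m r) / 2) :=
      ip_val1 fun p => by ring
    have v4 : ip M h (Psi h (b (m+1)) (fun r => (u (m+1) r + u m r) / 2))
        (fun p => u (m+1) p + u m p)
        = 2 * ip M h (Psi h (b (m+1)) (fun r => (u (m+1) r + u m r) / 2))
            (fun r => (u (m+1) r + u m r) / 2) :=
      ip_val1 fun p => by ring
    have v5 : ip M h (Dx h (fun r => (u (m+1) r + u m r) / 2))
        (fun p => u (m+1) p + u m p)
        = 2 * ip M h (Dx h (fun r => (u (m+1) r + u m r) / 2))
            (fun r => (u (m+1) r + u m r) / 2) :=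
      ip_val1 fun p => by ring
    have v6 : ip M h (Dx h (fun r => (w (m+1) r + w m r) / 2))
        (fun p => u (m+1) p + u m p)
        = 2 * ip M h (Dx h (fun r => (w (m+1) r + w m r) / 2))
            (fun r => (u (m+1) r + u m r) / 2) :=
      ip_val1 fun p => by ring
    have v7 : ip M h (fun p => (w (m+1) p + w m p) / 2) (fun p => u (m+1) p + u m p)
        = 2 * ip M h (fun p => (w (m+1) p + w m p) / 2)
            (fun r => (u (m+1) r + u m r) / 2) :=
      ip_val1 fun p => by ring
    rw [v1, v2, v3, v4, v5, v6, v7] at master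
    rw [ip_psi_self hM hA hub, ip_psi_self hM hB hub] at master
    have v5b : ip M h (Dx h (fun r => (u (m+1) r + u m r) / 2))
        (fun r => (u (m+1) r + u m r) / 2) = 0 := by
      rw [ip_comm]; exact ip_dx_self hM hub
    have v6b : ip M h (Dx h (fun r => (w (m+1) r + w m r) / 2))
        (fun r => (u (m+1) r + u m r) / 2) = 0 := by
      rw [ip_skew hM hwb hub, ip_dxavg hM hub hwb hrb, neg_zero]
    have v7b : ip M h (fun p => (w (m+1) p + w m p) / 2)
        (fun r => (u (m+1) r + u m r) / 2)
        = - sf M h (fun r => (u (m+1) r + u m r) / 2) (fun r => (u (m+1) r + u m r) / 2)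
          - h ^ 2 / 12 * ip M h (fun p => (w (m+1) p + w m p) / 2)
              (fun p => (w (m+1) p + w m p) / 2)
          + h ^ 4 / 144 * sf M h (fun p => (w (m+1) p + w m p) / 2)
              (fun p => (w (m+1) p + w m p) / 2) := by
      have := pair_ip hM hub hwb hub hwb hrb hrb
      exact this
    rw [v5b, v6b, v7b] at master
    have p11 := pair_ip hM hx hX hx hX hrx hrx
    have p12 := pair_ip hM hx hX hy hY hrx hry
    have p21 := pair_ip hM hy hY hx hX hry hrx
    have p22 := pair_ip hM hy hY hy hY hry hry
    rw [p11, p12, p21, p22] at master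
    rw [sf_comm (M := M) (h := h) (u m) (u (m+1)),
      ip_comm (M := M) (h := h) (w m) (w (m+1)),
      sf_comm (M := M) (h := h) (w m) (w (m+1))] at master
    -- now assemble the energies
    have esplit : ∀ f : ℕ → ℝ, (∑ n ∈ Finset.Icc 1 (m+1), f n)
        = (∑ n ∈ Finset.Icc 1 m, f n) + f (m+1) := fun f =>
      Finset.sum_Icc_succ_top (by omega) f
    simp only [energy, esplit, Nat.add_sub_cancel]
    simp only [nrm_sq hh, snorm1_sq hh]
    linear_combination master
  intro k
  induction k with
  | zero => intro _; rfl
  | succ m ih =>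
    intro hm
    rw [step m hm]
    exact ih (by omega)
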